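/- Let d ≥ 0, let N ≥ 0, and let n_0 ≥ n_1 ≥ … ≥ n_d ≥ 1 be integers. Let μ be the Young diagram whose conjugate partition is (n_0, …, n_d) (i.e., column i of μ has n_i cells for 0 ≤ i ≤ d). Then C(N, n_0, …, n_d) equals the number of semistandard Young tableaux of shape μ with entries in {0, …, N−1}. -/

import Mathlib

open Finset

namespace Statement7Aux

variable {N : ℕ}

lemma mem_iff_exists {s : Finset (Fin N)} {m : ℕ} (h : s.card = m) {k : Fin N} :
    k ∈ s ↔ ∃ r : Fin m, s.orderEmbOfFin h r = k := by
  constructor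
  · intro hk
    have : k ∈ Set.range (s.orderEmbOfFin h) := by
      rw [Finset.range_orderEmbOfFin]; exact hk
    exact this
  · rintro ⟨r, rfl⟩; exact s.orderEmbOfFin_mem h r

lemma card_filter_le_orderEmbOfFin {s : Finset (Fin N)} {m : ℕ} (h : s.card = m) (r : Fin m) :
    (s.filter (fun k => k ≤ s.orderEmbOfFin h r)).card = r + 1 := by
  have himg : s.filter (fun k => k ≤ s.orderEmbOfFin h r)
      = (Finset.Iic r).image (s.orderEmbOfFin h) := by
    ext k
    simp only [mem_filter, mem_image, mem_Iic]
    constructor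
    · rintro ⟨hk, hle⟩
      obtain ⟨r', rfl⟩ := (mem_iff_exists h).1 hk
      exact ⟨r', (s.orderEmbOfFin h).le_iff_le.1 hle, rfl⟩
    · rintro ⟨r', hr', rfl⟩
      exact ⟨s.orderEmbOfFin_mem h r', (s.orderEmbOfFin h).monotone hr'⟩
  rw [himg, Finset.card_image_of_injective _ (s.orderEmbOfFin h).injective, Fin.card_Iic]

lemma card_filter_lt_orderEmbOfFin {s : Finset (Fin N)} {m : ℕ} (h : s.card = m) (r : Fin m) :
    (s.filter (fun k => k < s.orderEmbOfFin h r)).card = r := by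
  have himg : s.filter (fun k => k < s.orderEmbOfFin h r)
      = (Finset.Iio r).image (s.orderEmbOfFin h) := by
    ext k
    simp only [mem_filter, mem_image, mem_Iio]
    constructor
    · rintro ⟨hk, hlt⟩
      obtain ⟨r', rfl⟩ := (mem_iff_exists h).1 hk
      exact ⟨r', (s.orderEmbOfFin h).lt_iff_lt.1 hlt, rfl⟩
    · rintro ⟨r', hr', rfl⟩
      exact ⟨s.orderEmbOfFin_mem h r', (s.orderEmbOfFin h).strictMono hr'⟩
  rw [himg, Finset.card_image_of_injective _ (s.orderEmbOfFin h).injective, Fin.card_Iio]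

lemma orderEmbOfFin_le {s t : Finset (Fin N)} {ms mt : ℕ} (hs : s.card = ms) (ht : t.card = mt)
    {r : ℕ} (hrs : r < ms) (hrt : r < mt)
    (hcount : ∀ L : Fin N,
      (t.filter (fun k => k ≤ L)).card ≤ (s.filter (fun k => k ≤ L)).card) :
    s.orderEmbOfFin hs ⟨r, hrs⟩ ≤ t.orderEmbOfFin ht ⟨r, hrt⟩ := by
  by_contra hlt
  push_neg at hlt
  have h1 : (t.filter (fun k => k ≤ t.orderEmbOfFin ht ⟨r, hrt⟩)).card = r + 1 :=
    card_filter_le_orderEmbOfFin ht ⟨r, hrt⟩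
  have h2 : (s.filter (fun k => k < s.orderEmbOfFin hs ⟨r, hrs⟩)).card = r :=
    card_filter_lt_orderEmbOfFin hs ⟨r, hrs⟩
  have h3 : s.filter (fun k => k ≤ t.orderEmbOfFin ht ⟨r, hrt⟩)
      ⊆ s.filter (fun k => k < s.orderEmbOfFin hs ⟨r, hrs⟩) :=
    Finset.monotone_filter_right s (fun k _ hk => lt_of_le_of_lt hk hlt)
  have h4 := Finset.card_le_card h3
  have h5 := hcount (t.orderEmbOfFin ht ⟨r, hrt⟩)
  omega

section Main

variable (d : ℕ) (N : ℕ) (n : Fin (d + 1) → ℕ) (μ : YoungDiagram)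

/-- Families of column sets with the dominance condition. -/
def BT : Type :=
  {S : Fin (d + 1) → Finset (Fin N) //
    (∀ i, (S i).card = n i) ∧
    (∀ (L : Fin N) (i j : Fin (d + 1)), i ≤ j →
      ((S j).filter (fun k => k ≤ L)).card ≤ ((S i).filter (fun k => k ≤ L)).card)}

/-- Ballot vectors ≃ column-set families. -/
noncomputable def equivAB :
    {v : Fin N → Fin (d + 1) → ℕ //
      (∀ k i, v k i ≤ 1) ∧
      (∀ i, ∑ k, v k i = n i) ∧
      (∀ L : Fin N, ∀ i j : Fin (d + 1), i ≤ j →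
        ∑ k ∈ Finset.univ.filter (fun k => k ≤ L), v k j ≤
          ∑ k ∈ Finset.univ.filter (fun k => k ≤ L), v k i)} ≃ BT d N n where
  toFun v := by
    refine ⟨fun i => Finset.univ.filter (fun k => v.1 k i = 1), ?_, ?_⟩
    · intro i
      rw [← v.2.2.1 i, Finset.card_filter]
      refine Finset.sum_congr rfl (fun k _ => ?_)
      have := v.2.1 k i
      split_ifs with h <;> omega
    · intro L i j hij
      have key : ∀ m : Fin (d + 1),
          (((Finset.univ.filter (fun k => v.1 k m = 1)).filter (fun k => k ≤ L)).card)
            = ∑ k ∈ Finset.univ.filter (fun k => k ≤ L), v.1 k m := by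
        intro m
        rw [Finset.filter_comm, Finset.card_filter]
        refine Finset.sum_congr rfl (fun k _ => ?_)
        have := v.2.1 k m
        split_ifs with h <;> omega
      rw [key, key]
      exact v.2.2.2 L i j hij
  invFun S := by
    refine ⟨fun k i => if k ∈ S.1 i then 1 else 0, fun k i => ?_, fun i => ?_, ?_⟩
    · dsimp only; split_ifs <;> omega
    · dsimp only
      rw [Finset.sum_ite_mem, Finset.univ_inter, ← Finset.card_eq_sum_ones, S.2.1 i]
    · intro L i j hij
      have key : ∀ m : Fin (d + 1),
          ∑ k ∈ Finset.univ.filter (fun k => k ≤ L), (if k ∈ S.1 m then 1 else 0)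
            = ((S.1 m).filter (fun k => k ≤ L)).card := by
        intro m
        rw [Finset.sum_ite_mem, ← Finset.card_eq_sum_ones]
        congr 1
        ext k
        simp [and_comm]
      rw [key, key]
      exact S.2.2 L i j hij
  left_inv v := by
    apply Subtype.ext
    funext k i
    simp only [Finset.mem_filter, Finset.mem_univ, true_and]
    have := v.2.1 k i
    split_ifs with h <;> omega
  right_inv S := by
    apply Subtype.ext
    funext i
    ext k
    simp only [Finset.mem_filter, Finset.mem_univ, true_and]
    split_ifs with h <;> simp [h]

variable {d N n μ}

lemma col_lt (hμ : ∀ i : ℕ, μ.colLen i = if h : i < d + 1 then n ⟨i, h⟩ else 0)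
    {r j : ℕ} (hm : (r, j) ∈ μ) : j < d + 1 := by
  have hr := YoungDiagram.mem_iff_lt_colLen.1 hm
  rw [hμ] at hr
  by_contra h
  simp [h] at hr

lemma row_lt (hμ : ∀ i : ℕ, μ.colLen i = if h : i < d + 1 then n ⟨i, h⟩ else 0)
    {r j : ℕ} (hm : (r, j) ∈ μ) : r < n ⟨j, col_lt hμ hm⟩ := by
  have hr := YoungDiagram.mem_iff_lt_colLen.1 hm
  rwa [hμ, dif_pos (col_lt hμ hm)] at hr

lemma mem_of_lt (hμ : ∀ i : ℕ, μ.colLen i = if h : i < d + 1 then n ⟨i, h⟩ else 0)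
    (i : Fin (d + 1)) {r : ℕ} (hr : r < n i) : (r, i.1) ∈ μ := by
  rw [YoungDiagram.mem_iff_lt_colLen, hμ, dif_pos i.isLt]
  simpa using hr

/-- The entry function of the tableau associated to a column-set family. -/
noncomputable def entryFun
    (hμ : ∀ i : ℕ, μ.colLen i = if h : i < d + 1 then n ⟨i, h⟩ else 0)
    (S : BT d N n) (r j : ℕ) : ℕ :=
  if hm : (r, j) ∈ μ then
    ((S.1 ⟨j, col_lt hμ hm⟩).orderEmbOfFin (S.2.1 ⟨j, col_lt hμ hm⟩)
      ⟨r, row_lt hμ hm⟩ : Fin N)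
  else 0

/-- The tableau associated to a column-set family. -/
noncomputable def ssytOf
    (hmono : ∀ i j : Fin (d + 1), i ≤ j → n j ≤ n i)
    (hμ : ∀ i : ℕ, μ.colLen i = if h : i < d + 1 then n ⟨i, h⟩ else 0)
    (S : BT d N n) : SemistandardYoungTableau μ where
  entry := entryFun hμ S
  row_weak' := by
    intro r j1 j2 hj hm2
    have hm1 : (r, j1) ∈ μ := μ.up_left_mem le_rfl hj.le hm2
    rw [entryFun, entryFun, dif_pos hm1, dif_pos hm2]
    have hij : (⟨j1, col_lt hμ hm1⟩ : Fin (d + 1)) ≤ ⟨j2, col_lt hμ hm2⟩ := hj.le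
    have := orderEmbOfFin_le (S.2.1 ⟨j1, col_lt hμ hm1⟩) (S.2.1 ⟨j2, col_lt hμ hm2⟩)
      (row_lt hμ hm1) (row_lt hμ hm2)
      (fun L => S.2.2 L _ _ hij)
    exact this
  col_strict' := by
    intro r1 r2 j hr hm2
    have hm1 : (r1, j) ∈ μ := μ.up_left_mem hr.le le_rfl hm2
    rw [entryFun, entryFun, dif_pos hm1, dif_pos hm2]
    exact ((S.1 ⟨j, col_lt hμ hm2⟩).orderEmbOfFin (S.2.1 _)).strictMono
      (show (⟨r1, row_lt hμ hm1⟩ : Fin _) < ⟨r2, row_lt hμ hm2⟩ from hr)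
  zeros' := by
    intro r j hm
    rw [entryFun, dif_neg hm]

lemma ssytOf_apply (hmono : ∀ i j : Fin (d + 1), i ≤ j → n j ≤ n i)
    (hμ : ∀ i : ℕ, μ.colLen i = if h : i < d + 1 then n ⟨i, h⟩ else 0)
    (S : BT d N n) (r j : ℕ) :
    ssytOf hmono hμ S r j = entryFun hμ S r j := rfl

/-- The column-set family of a bounded tableau. -/
noncomputable def setsOf
    (hμ : ∀ i : ℕ, μ.colLen i = if h : i < d + 1 then n ⟨i, h⟩ else 0)
    (T : SemistandardYoungTableau μ) (hT : ∀ i j : ℕ, (i, j) ∈ μ → T i j < N)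
    (i : Fin (d + 1)) : Finset (Fin N) :=
  Finset.univ.image (fun r : Fin (n i) =>
    (⟨T r i, hT r i (mem_of_lt hμ i r.isLt)⟩ : Fin N))

lemma setsOf_strictMono
    (hμ : ∀ i : ℕ, μ.colLen i = if h : i < d + 1 then n ⟨i, h⟩ else 0)
    (T : SemistandardYoungTableau μ) (hT : ∀ i j : ℕ, (i, j) ∈ μ → T i j < N)
    (i : Fin (d + 1)) :
    StrictMono (fun r : Fin (n i) =>
      (⟨T r i, hT r i (mem_of_lt hμ i r.isLt)⟩ : Fin N)) := by
  intro a b hab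
  have : T a i < T b i := T.col_strict hab (mem_of_lt hμ i b.isLt)
  exact this

lemma setsOf_card
    (hμ : ∀ i : ℕ, μ.colLen i = if h : i < d + 1 then n ⟨i, h⟩ else 0)
    (T : SemistandardYoungTableau μ) (hT : ∀ i j : ℕ, (i, j) ∈ μ → T i j < N)
    (i : Fin (d + 1)) : (setsOf hμ T hT i).card = n i := by
  rw [setsOf, Finset.card_image_of_injective _ (setsOf_strictMono hμ T hT i).injective,
    Finset.card_univ, Fintype.card_fin]


lemma setsOf_count
    (hmono : ∀ i j : Fin (d + 1), i ≤ j → n j ≤ n i)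
    (hμ : ∀ i : ℕ, μ.colLen i = if h : i < d + 1 then n ⟨i, h⟩ else 0)
    (T : SemistandardYoungTableau μ) (hT : ∀ i j : ℕ, (i, j) ∈ μ → T i j < N)
    (L : Fin N) (i j : Fin (d + 1)) (hij : i ≤ j) :
    ((setsOf hμ T hT j).filter (fun k => k ≤ L)).card
      ≤ ((setsOf hμ T hT i).filter (fun k => k ≤ L)).card := by
  rw [setsOf, setsOf, Finset.filter_image, Finset.filter_image,
    Finset.card_image_of_injective _ (setsOf_strictMono hμ T hT j).injective,
    Finset.card_image_of_injective _ (setsOf_strictMono hμ T hT i).injective]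
  apply Finset.card_le_card_of_injOn
    (fun r : Fin (n j) => (⟨r.1, lt_of_lt_of_le r.2 (hmono i j hij)⟩ : Fin (n i)))
  · intro r hr
    simp only [Finset.mem_coe, Finset.mem_filter, Finset.mem_univ, true_and] at hr ⊢
    refine le_trans ?_ hr
    show T r.1 i.1 ≤ T r.1 j.1
    rcases lt_or_eq_of_le (show i.1 ≤ j.1 from hij) with h | h
    · exact T.row_weak h (mem_of_lt hμ j r.2)
    · rw [h]
  · intro a _ b _ hab
    have h2 := congrArg Fin.val hab
    exact Fin.ext h2

/-- Column-set families ≃ bounded SSYT. -/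
noncomputable def equivBC
    (hmono : ∀ i j : Fin (d + 1), i ≤ j → n j ≤ n i)
    (hμ : ∀ i : ℕ, μ.colLen i = if h : i < d + 1 then n ⟨i, h⟩ else 0) :
    BT d N n ≃ {T : SemistandardYoungTableau μ // ∀ i j : ℕ, (i, j) ∈ μ → T i j < N} where
  toFun S := ⟨ssytOf hmono hμ S, by
    intro r j hm
    rw [ssytOf_apply, entryFun, dif_pos hm]
    exact ((S.1 ⟨j, col_lt hμ hm⟩).orderEmbOfFin (S.2.1 ⟨j, col_lt hμ hm⟩)
      ⟨r, row_lt hμ hm⟩).isLt⟩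
  invFun T := ⟨setsOf hμ T.1 T.2, fun i => setsOf_card hμ T.1 T.2 i,
    fun L i j hij => setsOf_count hmono hμ T.1 T.2 L i j hij⟩
  left_inv S := by
    apply Subtype.ext
    funext i
    refine Finset.eq_of_subset_of_card_le ?_ ?_
    · intro k hk
      obtain ⟨r, -, rfl⟩ := Finset.mem_image.1 hk
      have hval : (ssytOf hmono hμ S) r.1 i.1
          = ((S.1 i).orderEmbOfFin (S.2.1 i) ⟨r.1, r.2⟩ : Fin N).1 := by
        rw [ssytOf_apply, entryFun, dif_pos (mem_of_lt hμ i r.2)]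
      suffices h : ∀ (p : (ssytOf hmono hμ S) r.1 i.1 < N),
          (⟨(ssytOf hmono hμ S) r.1 i.1, p⟩ : Fin N) ∈ S.1 i from h _
      intro p
      have heq : (⟨(ssytOf hmono hμ S) r.1 i.1, p⟩ : Fin N)
          = (S.1 i).orderEmbOfFin (S.2.1 i) ⟨r.1, r.2⟩ := Fin.ext hval
      rw [heq]
      exact Finset.orderEmbOfFin_mem _ _ _
    · rw [setsOf_card hμ _ _ i, S.2.1 i]
  right_inv T := by
    apply Subtype.ext
    apply SemistandardYoungTableau.ext
    intro r j
    by_cases hm : (r, j) ∈ μ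
    · refine (show ∀ S : BT d N n, ssytOf hmono hμ S r j = ((S.1 ⟨j, col_lt hμ hm⟩).orderEmbOfFin
          (S.2.1 ⟨j, col_lt hμ hm⟩) ⟨r, row_lt hμ hm⟩ : Fin N) from
          fun S => by rw [ssytOf_apply, entryFun, dif_pos hm]) _ |>.trans ?_
      set i : Fin (d + 1) := ⟨j, col_lt hμ hm⟩ with hi
      have hfs : ∀ x : Fin (n i),
          (⟨T.1 x i, T.2 x i (mem_of_lt hμ i x.isLt)⟩ : Fin N) ∈ setsOf hμ T.1 T.2 i :=
        fun x => Finset.mem_image_of_mem _ (Finset.mem_univ x)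
      have huniq := Finset.orderEmbOfFin_unique (setsOf_card hμ T.1 T.2 i) hfs
        (setsOf_strictMono hμ T.1 T.2 i)
      have hcf := congrFun huniq ⟨r, row_lt hμ hm⟩
      exact (congrArg Fin.val hcf).symm
    · refine (show ∀ S : BT d N n, ssytOf hmono hμ S r j = 0 from
          fun S => by rw [ssytOf_apply, entryFun, dif_neg hm]) _ |>.trans ?_
      exact (T.1.zeros hm).symm

end Main

end Statement7Aux

/-- The Vandermonde product `∏_{i<j} (x i - x j)`. -/
def vmd {k : ℕ} {R : Type*} [CommRing R] (x : Fin k → R) : R :=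
  ∏ i : Fin k, ∏ j ∈ Finset.univ.filter (fun j => i < j), (x i - x j)

/-- `C(N, n_0, …, n_d)`: the number of lists `(v_1, …, v_N)` of vectors in `{0,1}^{d+1}`
summing to `(n_0, …, n_d)` all of whose partial sums are weakly decreasing in the
coordinates. -/
noncomputable def ballotCount (d N : ℕ) (n : Fin (d + 1) → ℕ) : ℕ :=
  Nat.card {v : Fin N → Fin (d + 1) → ℕ //
    (∀ k i, v k i ≤ 1) ∧
    (∀ i, ∑ k, v k i = n i) ∧
    (∀ L : Fin N, ∀ i j : Fin (d + 1), i ≤ j →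
      ∑ k ∈ Finset.univ.filter (fun k => k ≤ L), v k j ≤
        ∑ k ∈ Finset.univ.filter (fun k => k ≤ L), v k i)}

/-- If `n_0 ≥ … ≥ n_d ≥ 1` and `μ` is the Young diagram whose conjugate partition is
`(n_0, …, n_d)` (column `i` of `μ` has `n_i` cells), then `C(N, n_0, …, n_d)` is the number
of semistandard Young tableaux of shape `μ` with entries in `{0, …, N-1}`. -/
theorem statement7 (d N : ℕ) (n : Fin (d + 1) → ℕ)
    (hmono : ∀ i j : Fin (d + 1), i ≤ j → n j ≤ n i) (hpos : ∀ i, 1 ≤ n i)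
    (μ : YoungDiagram)
    (hμ : ∀ i : ℕ, μ.colLen i = if h : i < d + 1 then n ⟨i, h⟩ else 0) :
    ballotCount d N n
      = Nat.card {T : SemistandardYoungTableau μ // ∀ i j : ℕ, (i, j) ∈ μ → T i j < N} := by
  rw [ballotCount]
  exact Nat.card_congr ((Statement7Aux.equivAB d N n).trans
    (Statement7Aux.equivBC hmono hμ))
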